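/- Let α ∈ ℂ be any root of φ(X) = X⁴ − 2X³ + 6X − 3, and let s₃ = (1 − √2·3^{1/4} − √3)/2 and s₄ = (1 + √2·3^{1/4} − √3)/2. Then there exists a number field M (a subfield of ℂ which is finite-dimensional over ℚ) containing s₃, s₄ and α, together with a ℚ-algebra automorphism σ of M satisfying σ(s₃) = s₄ and σ(α) = α. -/

import Mathlib

open Polynomial IntermediateField

noncomputable def sThree : ℂ :=
  (1 - (Real.sqrt 2 : ℂ) * (((3 : ℝ) ^ ((1 : ℝ) / 4) : ℝ) : ℂ) - (Real.sqrt 3 : ℂ)) / 2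

noncomputable def sFour : ℂ :=
  (1 + (Real.sqrt 2 : ℂ) * (((3 : ℝ) ^ ((1 : ℝ) / 4) : ℝ) : ℂ) - (Real.sqrt 3 : ℂ)) / 2

noncomputable def phiQ : ℚ[X] := X^4 - 2*X^3 + 6*X - 3

noncomputable def tC : ℂ := (Real.sqrt 2 : ℂ) * (((3 : ℝ) ^ ((1 : ℝ) / 4) : ℝ) : ℂ)

noncomputable def r3 : ℂ := (Real.sqrt 3 : ℂ)

lemma rpow_sq : ((3 : ℝ) ^ ((1 : ℝ) / 4))^2 = Real.sqrt 3 := by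
  rw [← Real.rpow_natCast ((3:ℝ)^((1:ℝ)/4)) 2, ← Real.rpow_mul (by norm_num)]
  rw [Real.sqrt_eq_rpow]
  norm_num

lemma tC_sq : tC^2 = 2 * r3 := by
  unfold tC r3
  rw [mul_pow, ← Complex.ofReal_pow, ← Complex.ofReal_pow, rpow_sq,
    Real.sq_sqrt (by norm_num : (0:ℝ) ≤ 2)]
  push_cast
  ring

lemma r3_sq : r3^2 = 3 := by
  unfold r3
  rw [← Complex.ofReal_pow, Real.sq_sqrt (by norm_num : (0:ℝ) ≤ 3)]
  norm_num

lemma tC_pow4 : tC^4 = 12 := by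
  have : tC^4 = (tC^2)^2 := by ring
  rw [this, tC_sq, mul_pow, r3_sq]
  norm_num

lemma gZ_monic : (X^4 + 2*X^3 + 4*X + 2 : ℤ[X]).Monic := by monicity!

lemma gZ_irred : Irreducible (X^4 + 2*X^3 + 4*X + 2 : ℤ[X]) := by
  apply Polynomial.irreducible_of_eisenstein_criterion (P := Ideal.span {2})
  · rw [Ideal.span_singleton_prime (by norm_num)]; exact Int.prime_two
  · rw [gZ_monic.leadingCoeff]; simp [Ideal.mem_span_singleton]
  · intro n hn
    rw [show (X^4 + 2*X^3 + 4*X + 2 : ℤ[X]).degree = 4 by compute_degree!] at hn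
    have hn' : n < 4 := by exact_mod_cast hn
    interval_cases n <;> simp [coeff_one, coeff_X, Ideal.mem_span_singleton] <;> decide
  · rw [show (X^4 + 2*X^3 + 4*X + 2 : ℤ[X]).degree = 4 by compute_degree!]; norm_num
  · simp [Ideal.span_singleton_pow, Ideal.mem_span_singleton]
  · exact gZ_monic.isPrimitive

lemma phiQ_monic : phiQ.Monic := by unfold phiQ; monicity!

lemma phiQ_irred : Irreducible phiQ := by
  have hg : Irreducible (X^4 + 2*X^3 + 4*X + 2 : ℚ[X]) := by
    have := (gZ_monic.irreducible_iff_irreducible_map_fraction_map (K := ℚ)).mp gZ_irred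
    convert this using 1
    simp [Polynomial.map_add, Polynomial.map_pow, Polynomial.map_mul, Polynomial.map_ofNat]
  have := (MulEquiv.irreducible_iff (algEquivAevalXAddC (-1 : ℚ)).toMulEquiv).mpr hg
  convert this using 1
  unfold phiQ
  simp [algEquivAevalXAddC_apply, map_ofNat]
  ring

instance : Fact (Nat.Prime 13) := ⟨by norm_num⟩

lemma padic_root_phi : ∃ z : ℚ_[13], Polynomial.aeval z phiQ = 0 := by
  have h : ∃ z : ℤ_[13], (z^4 - 2*z^3 + 6*z - 3 : ℤ_[13]) = 0 := by
    have key := hensels_lemma (p := 13) (F := (X^4 - 2*X^3 + 6*X - 3 : ℤ_[13][X])) (a := 6) ?_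
    · obtain ⟨z, hz, -⟩ := key
      exact ⟨z, by simpa using hz⟩
    · have h1 : ((X^4 - 2*X^3 + 6*X - 3 : ℤ_[13][X])).eval 6 = 897 := by norm_num
      have h2 : ((X^4 - 2*X^3 + 6*X - 3 : ℤ_[13][X])).derivative.eval 6 = 654 := by
        simp [derivative_X_pow]; norm_num
      simp only [Polynomial.coe_aeval_eq_eval]
      rw [h1, h2]
      have hlt : ‖(897 : ℤ_[13])‖ < 1 := by
        have : ((897 : ℤ) : ℤ_[13]) = 897 := by push_cast; ring
        rw [← this, PadicInt.norm_int_lt_one_iff_dvd]; decide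
      have he : ‖(654 : ℤ_[13])‖ = 1 := by
        refine le_antisymm (PadicInt.norm_le_one _) (not_lt.mp ?_)
        intro hc
        have : ((654 : ℤ) : ℤ_[13]) = 654 := by push_cast; ring
        rw [← this, PadicInt.norm_int_lt_one_iff_dvd] at hc
        omega
      rw [he]; simpa using hlt
  obtain ⟨z, hz⟩ := h
  refine ⟨(z : ℚ_[13]), ?_⟩
  unfold phiQ
  simp only [map_sub, map_add, map_mul, map_pow, aeval_X, map_ofNat]
  have h0 := congrArg (PadicInt.Coe.ringHom (p := 13)) hz
  push_cast at h0 ⊢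
  exact_mod_cast congrArg (fun t : ℤ_[13] => (t : ℚ_[13])) hz

lemma padic_sqrt3 : ∃ s : ℚ_[13], s^2 = 3 := by
  have key := hensels_lemma (p := 13) (F := (X^2 - 3 : ℤ_[13][X])) (a := 4) ?_
  · obtain ⟨z, hz, -⟩ := key
    refine ⟨(z : ℚ_[13]), ?_⟩
    have hz' : (z^2 - 3 : ℤ_[13]) = 0 := by simpa using hz
    have hz2 : (z^2 : ℤ_[13]) = 3 := by linear_combination hz'
    exact_mod_cast congrArg (fun t : ℤ_[13] => (t : ℚ_[13])) hz2
  · have h1 : ((X^2 - 3 : ℤ_[13][X])).eval 4 = 13 := by norm_num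
    have h2 : ((X^2 - 3 : ℤ_[13][X])).derivative.eval 4 = 8 := by
      simp [derivative_X_pow]; norm_num
    simp only [Polynomial.coe_aeval_eq_eval]
    rw [h1, h2]
    have hlt : ‖(13 : ℤ_[13])‖ < 1 := by
      have : ((13 : ℤ) : ℤ_[13]) = 13 := by push_cast; ring
      rw [← this, PadicInt.norm_int_lt_one_iff_dvd]; decide
    have he : ‖(8 : ℤ_[13])‖ = 1 := by
      refine le_antisymm (PadicInt.norm_le_one _) (not_lt.mp ?_)
      intro hc
      have : ((8 : ℤ) : ℤ_[13]) = 8 := by push_cast; ring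
      rw [← this, PadicInt.norm_int_lt_one_iff_dvd] at hc
      omega
    rw [he]; simpa using hlt

lemma no_fourth_root (x : ℚ_[13]) : x^4 ≠ 12 := by
  intro hx
  have h12 : ‖(12 : ℚ_[13])‖ = 1 := by
    have hi : ((12 : ℤ) : ℚ_[13]) = 12 := by push_cast; ring
    refine le_antisymm (by rw [← hi]; exact Padic.norm_int_le_one _) (not_lt.mp ?_)
    intro hc
    rw [← hi, Padic.norm_intCast_lt_one_iff] at hc
    omega
  have hnx : ‖x‖ ≤ 1 := by
    by_contra hgt
    push_neg at hgt
    have h1 : ‖x^4‖ = ‖x‖^4 := by simp [norm_pow]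
    rw [hx, h12] at h1
    have h4 : (1:ℝ) < ‖x‖^4 := one_lt_pow₀ hgt (by norm_num)
    linarith
  set w : ℤ_[13] := ⟨x, hnx⟩ with hw
  have hw4 : (w^4 : ℤ_[13]) = 12 := by
    apply Subtype.ext
    push_cast [hw]
    exact hx
  have hb := congrArg (PadicInt.toZMod (p := 13)) hw4
  rw [map_pow, map_ofNat] at hb
  revert hb
  generalize PadicInt.toZMod w = b
  revert b
  decide

set_option maxHeartbeats 1000000 in
theorem stmt_13 (α : ℂ) (hα : α ^ 4 - 2 * α ^ 3 + 6 * α - 3 = 0) :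
    ∃ (M : IntermediateField ℚ ℂ) (_ : FiniteDimensional ℚ M)
      (hs3 : sThree ∈ M) (hs4 : sFour ∈ M) (hαM : α ∈ M)
      (σ : M ≃ₐ[ℚ] M),
      σ ⟨sThree, hs3⟩ = ⟨sFour, hs4⟩ ∧ σ ⟨α, hαM⟩ = ⟨α, hαM⟩ := by
  classical
  -- α is integral, with minimal polynomial phiQ
  have haev : Polynomial.aeval α phiQ = 0 := by
    unfold phiQ
    simp only [map_sub, map_add, map_mul, map_pow, aeval_X, map_ofNat]
    linear_combination hα
  have hαint : IsIntegral ℚ α := ⟨phiQ, phiQ_monic, haev⟩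
  have hminα : minpoly ℚ α = phiQ :=
    (minpoly.eq_of_irreducible_of_monic phiQ_irred haev phiQ_monic).symm
  -- the embedding ψ₁ : ℚ⟮α⟯ →ₐ[ℚ] ℚ_[13]
  obtain ⟨z, hz⟩ := padic_root_phi
  let pb1 := IntermediateField.adjoin.powerBasis hαint
  have hz' : Polynomial.aeval z (minpoly ℚ pb1.gen) = 0 := by
    rw [IntermediateField.adjoin.powerBasis_gen,
      show minpoly ℚ (AdjoinSimple.gen ℚ α) = phiQ from (IntermediateField.minpoly_gen ℚ α).trans hminα]
    exact hz
  let ψ₁ : ℚ⟮α⟯ →ₐ[ℚ] ℚ_[13] := pb1.lift z hz'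
  -- adjoin √3
  have hr3int : IsIntegral ℚ⟮α⟯ r3 := by
    refine ⟨X^2 - C 3, ?_, ?_⟩
    · monicity!
    · simp only [map_sub, map_pow, aeval_X, aeval_C, map_ofNat, eval₂_sub, eval₂_pow,
        eval₂_X, eval₂_ofNat]
      rw [r3_sq]; ring
  letI : Algebra ℚ⟮α⟯ ℚ_[13] := ψ₁.toRingHom.toAlgebra
  -- ψ₂ : ℚ⟮α⟯⟮r3⟯ →ₐ[ℚ⟮α⟯] ℚ_[13]
  obtain ⟨s, hs⟩ := padic_sqrt3
  have hsplit : Splits ((X^2 - C (3 : ℚ⟮α⟯)).map (algebraMap ℚ⟮α⟯ ℚ_[13])) := by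
    have hmap : (X^2 - C (3 : ℚ⟮α⟯)).map (algebraMap ℚ⟮α⟯ ℚ_[13])
        = (X - C s) * (X - C (-s)) := by
      rw [Polynomial.map_sub, Polynomial.map_pow, map_X, map_C, map_ofNat]
      rw [show (3 : ℚ_[13]) = s^2 from hs.symm, C_pow, C_neg]
      ring
    rw [hmap]
    exact (Splits.X_sub_C _).mul (Splits.X_sub_C _)
  -- the minimal polynomial of r3 over ℚ⟮α⟯ has a root in ℚ_[13]
  have haev3 : Polynomial.aeval r3 (X^2 - C (3 : ℚ⟮α⟯)) = 0 := by
    simp only [map_sub, map_pow, aeval_X, aeval_C, map_ofNat, eval₂_sub, eval₂_pow,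
      eval₂_X, eval₂_ofNat]
    rw [r3_sq]; ring
  have hdvd3 : minpoly ℚ⟮α⟯ r3 ∣ (X^2 - C (3 : ℚ⟮α⟯)) := minpoly.dvd _ _ haev3
  have hX23ne : (X^2 - C (3 : ℚ⟮α⟯)) ≠ 0 := by
    intro h
    have := congrArg (fun q => Polynomial.coeff q 2) h
    simp [coeff_X, coeff_C] at this
  have hsplitmin : Splits ((minpoly ℚ⟮α⟯ r3).map (algebraMap ℚ⟮α⟯ ℚ_[13])) :=
    hsplit.of_dvd (Polynomial.map_ne_zero hX23ne) (Polynomial.map_dvd _ hdvd3)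
  obtain ⟨w, hw⟩ := hsplitmin.exists_eval_eq_zero
    (by rw [degree_map]; exact (minpoly.degree_pos hr3int).ne')
  let pb2 := IntermediateField.adjoin.powerBasis hr3int
  have hw' : Polynomial.aeval w (minpoly ℚ⟮α⟯ pb2.gen) = 0 := by
    rw [IntermediateField.adjoin.powerBasis_gen,
      show minpoly ℚ⟮α⟯ (AdjoinSimple.gen ℚ⟮α⟯ r3) = minpoly ℚ⟮α⟯ r3 from IntermediateField.minpoly_gen ℚ⟮α⟯ r3]
    rw [aeval_def, ← eval_map]
    exact hw
  let ψ₂ : ℚ⟮α⟯⟮r3⟯ →ₐ[ℚ⟮α⟯] ℚ_[13] := pb2.lift w hw'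
  -- tC is not in K = ℚ⟮α⟯⟮r3⟯
  have htK : tC ∉ ℚ⟮α⟯⟮r3⟯ := by
    intro hmem
    have hx4 : (⟨tC, hmem⟩ : ℚ⟮α⟯⟮r3⟯)^4 = 12 := by
      apply Subtype.ext
      push_cast
      exact tC_pow4
    have h4 := congrArg ψ₂ hx4
    rw [map_pow, map_ofNat] at h4
    exact no_fourth_root _ h4
  -- the field K = ℚ(α, √3)
  set K : IntermediateField ℚ ℂ := IntermediateField.restrictScalars ℚ (ℚ⟮α⟯⟮r3⟯) with hK
  have hr3K : r3 ∈ K := IntermediateField.mem_adjoin_simple_self ℚ⟮α⟯ r3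
  have hαK : α ∈ K := by
    have h := IntermediateField.algebraMap_mem (ℚ⟮α⟯⟮r3⟯)
      (⟨α, IntermediateField.mem_adjoin_simple_self ℚ α⟩ : ℚ⟮α⟯)
    exact h
  have htKnot : tC ∉ K := htK
  set kR3 : K := ⟨r3, hr3K⟩ with hkR3
  -- the quadratic X² - 2√3 over K is irreducible
  have hquadirr : Irreducible (X^2 - C (2 * kR3) : K[X]) := by
    rw [X_pow_sub_C_irreducible_iff_of_prime Nat.prime_two]
    intro b hb
    have hbc : ((b : ℂ))^2 = 2 * r3 := by
      have := congrArg (fun x : K => (x : ℂ)) hb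
      rw [IntermediateField.coe_pow, IntermediateField.coe_mul] at this
      exact this
    have hfact : ((b : ℂ) - tC) * ((b : ℂ) + tC) = 0 := by
      rw [← tC_sq] at hbc
      ring_nf
      linear_combination hbc
    rcases mul_eq_zero.mp hfact with h | h
    · have heq : tC = (b : ℂ) := by linear_combination -h
      exact htKnot (heq ▸ b.2)
    · have heq : tC = -(b : ℂ) := by linear_combination h
      exact htKnot (heq ▸ K.neg_mem b.2)
  -- minimal polynomial of tC over K
  have haevq : Polynomial.aeval tC (X^2 - C (2 * kR3) : K[X]) = 0 := by
    simp only [map_sub, map_pow, aeval_X, aeval_C]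
    have hmap : algebraMap K ℂ (2 * kR3) = 2 * r3 := by
      push_cast [hkR3]
      rfl
    rw [hmap, tC_sq]
    ring
  have hqmonic : (X^2 - C (2 * kR3) : K[X]).Monic := monic_X_pow_sub_C _ (by norm_num)
  have hminq : minpoly K tC = (X^2 - C (2 * kR3) : K[X]) :=
    (minpoly.eq_of_irreducible_of_monic hquadirr haevq hqmonic).symm
  have htint : IsIntegral K tC := ⟨_, hqmonic, haevq⟩
  -- the top field E = K⟮tC⟯ and the automorphism sending tC to -tC
  set E : IntermediateField K ℂ := K⟮tC⟯ with hE
  have htE : tC ∈ E := IntermediateField.mem_adjoin_simple_self K tC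
  have hnegtE : -tC ∈ E := E.neg_mem htE
  let pb3 := IntermediateField.adjoin.powerBasis htint
  have hy : Polynomial.aeval (⟨-tC, hnegtE⟩ : E) (minpoly K pb3.gen) = 0 := by
    rw [IntermediateField.adjoin.powerBasis_gen,
      show minpoly K (AdjoinSimple.gen K tC) = minpoly K tC from IntermediateField.minpoly_gen K tC, hminq]
    simp only [map_sub, map_pow, aeval_X, aeval_C]
    apply Subtype.ext
    push_cast
    show (-tC)^2 - ((((2 : K) : ℂ)) * ((kR3 : K) : ℂ)) = 0
    have h2 : ((2 : K) : ℂ) = 2 := rfl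
    have hk : ((kR3 : K) : ℂ) = r3 := rfl
    rw [h2, hk, show (-tC)^2 = tC^2 by ring, tC_sq]
    ring
  let σ₀ : E →ₐ[K] E := pb3.lift (⟨-tC, hnegtE⟩ : E) hy
  haveI : FiniteDimensional K E := IntermediateField.adjoin.finiteDimensional htint
  have hinj : Function.Injective σ₀ := σ₀.toRingHom.injective
  have hsurj : Function.Surjective σ₀ :=
    LinearMap.injective_iff_surjective.mp hinj
  let σ₁ : E ≃ₐ[K] E := AlgEquiv.ofBijective σ₀ ⟨hinj, hsurj⟩
  let σ : E ≃ₐ[ℚ] E := σ₁.restrictScalars ℚ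
  -- memberships in E
  have hr3E : r3 ∈ E := by
    have h := IntermediateField.algebraMap_mem E kR3
    exact h
  have hαE : α ∈ E := by
    have h := IntermediateField.algebraMap_mem E (⟨α, hαK⟩ : K)
    exact h
  have h2E : (2 : ℂ) ∈ E := by
    have h := IntermediateField.algebraMap_mem E (2 : K)
    exact h
  have hs3E : sThree ∈ E := by
    show (1 - tC - r3)/2 ∈ E
    exact IntermediateField.div_mem _
      (IntermediateField.sub_mem _ (IntermediateField.sub_mem _ (IntermediateField.one_mem _) htE) hr3E) h2E
  have hs4E : sFour ∈ E := by
    show (1 + tC - r3)/2 ∈ E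
    exact IntermediateField.div_mem _
      (IntermediateField.sub_mem _ (IntermediateField.add_mem _ (IntermediateField.one_mem _) htE) hr3E) h2E
  -- finite dimensionality
  haveI hfd1 : FiniteDimensional ℚ ℚ⟮α⟯ := IntermediateField.adjoin.finiteDimensional hαint
  haveI hfd2 : FiniteDimensional ℚ⟮α⟯ ℚ⟮α⟯⟮r3⟯ := IntermediateField.adjoin.finiteDimensional hr3int
  haveI hfdK : FiniteDimensional ℚ K := FiniteDimensional.trans ℚ ℚ⟮α⟯ ℚ⟮α⟯⟮r3⟯
  haveI hfdE : FiniteDimensional ℚ E := FiniteDimensional.trans ℚ K E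
  -- the key computation: σ₀ sends the generator tC to -tC
  have hgen : σ₀ (⟨tC, htE⟩ : E) = (⟨-tC, hnegtE⟩ : E) := by
    have h := pb3.lift_gen (⟨-tC, hnegtE⟩ : E) hy
    exact h
  refine ⟨IntermediateField.restrictScalars ℚ E, hfdE, hs3E, hs4E, hαE, σ, ?_, ?_⟩
  · -- σ sends s₃ to s₄
    have hexp3 : (⟨sThree, hs3E⟩ : E)
        = (1 - (⟨tC, htE⟩ : E) - algebraMap K E kR3) / algebraMap K E (2 : K) := by
      apply Subtype.ext
      push_cast
      show sThree = (1 - tC - r3)/(2:ℂ)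
      rfl
    show σ₁ ⟨sThree, hs3E⟩ = ⟨sFour, hs4E⟩
    show σ₀ ⟨sThree, hs3E⟩ = ⟨sFour, hs4E⟩
    rw [hexp3, map_div₀, map_sub, map_sub, map_one, hgen, σ₀.commutes, σ₀.commutes]
    apply Subtype.ext
    push_cast
    show (1 - (-tC) - r3)/((2:K):ℂ) = sFour
    show (1 - (-tC) - r3)/(2:ℂ) = sFour
    show (1 - (-tC) - r3)/(2:ℂ) = (1 + tC - r3)/2
    ring
  · -- σ fixes α
    have hexpa : (⟨α, hαE⟩ : E) = algebraMap K E (⟨α, hαK⟩ : K) := rfl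
    show σ₁ ⟨α, hαE⟩ = ⟨α, hαE⟩
    show σ₀ ⟨α, hαE⟩ = ⟨α, hαE⟩
    rw [hexpa, σ₀.commutes]
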